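/- (Kozlov's theorem, part (i).) Consider a discrete-time random walk in a time-dependent random environment with law ℙ on Ω^ℕ stationary under all space-time shifts (note every ω ∈ Ω^ℕ satisfies ω_n(x,e) > 0 for all e ∈ U by definition of 𝒫(U)). Assume {θ_{1,z} : z ∈ U} is an ergodic family of transformations for ℙ. If ν is an invariant probability measure for the environmental process which is absolutely continuous with respect to ℙ, then ν is equivalent to ℙ (i.e., ℙ is also absolutely continuous with respect to ν). -/

import Mathlib

open MeasureTheory

namespace KozlovPartOne

/-- Points of the lattice `ℤ^d`. -/
abbrev Zd (d : ℕ) := Fin d → ℤ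

/-- The space `Ω^ℕ` of time-dependent environments. -/
abbrev EnvSpace (d : ℕ) := ℕ → Zd d → Zd d → ℝ

/-- The space-time shift `θ_{n,x}`. -/
def thetaShift (d : ℕ) (n : ℕ) (x : Zd d) (ω : EnvSpace d) : EnvSpace d :=
  fun m y e => ω (n + m) (y + x) e

/-- `ω` is an honest environment with jump range `U` (in particular `ω_n(x,e) > 0` for
every `e ∈ U`, as in the definition of `𝒫(U)`). -/
def IsEnv (d : ℕ) (U : Finset (Zd d)) (ω : EnvSpace d) : Prop :=
  ∀ n x, (∀ e ∈ U, 0 < ω n x e) ∧ (∀ e, e ∉ U → ω n x e = 0) ∧ (∑ e ∈ U, ω n x e = 1)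

/-- The transition operator of the environmental process. -/
def Rop (d : ℕ) (U : Finset (Zd d)) (g : EnvSpace d → ℝ) (ω : EnvSpace d) : ℝ :=
  ∑ e ∈ U, ω 0 0 e * g (thetaShift d 1 e ω)

/-- `ν` is an invariant distribution for the environmental process. -/
def IsInvariantMeasure (d : ℕ) (U : Finset (Zd d)) (ν : Measure (EnvSpace d)) : Prop :=
  ∀ g : EnvSpace d → ℝ, Measurable g → (∃ C, ∀ ω, |g ω| ≤ C) →
    ∫ ω, Rop d U g ω ∂ν = ∫ ω, g ω ∂ν

/- ### Auxiliary lemmas -/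

lemma measurable_eval3 (d : ℕ) (n : ℕ) (y e : Zd d) :
    Measurable fun ω : EnvSpace d => ω n y e := by
  have h1 : Measurable fun ω : EnvSpace d => ω n := measurable_pi_apply n
  have h2 : Measurable fun ω : EnvSpace d => ω n y := h1.eval
  exact h2.eval

lemma measurable_thetaShift (d n : ℕ) (x : Zd d) : Measurable (thetaShift d n x) := by
  unfold thetaShift
  refine measurable_pi_lambda _ fun m => ?_
  refine measurable_pi_lambda _ fun y => ?_
  refine measurable_pi_lambda _ fun e => ?_
  exact measurable_eval3 d (n + m) (y + x) e

lemma theta_add (d n k : ℕ) (x z : Zd d) (ω : EnvSpace d) :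
    thetaShift d n x (thetaShift d k z ω) = thetaShift d (k + n) (x + z) ω := by
  funext m y e
  simp only [thetaShift]
  rw [show k + (n + m) = k + n + m by omega, show y + x + z = y + (x + z) by abel]

/-- Composite shift along a word. -/
def Θ (d : ℕ) (l : List (Zd d)) (ω : EnvSpace d) : EnvSpace d :=
  thetaShift d l.length l.sum ω

lemma Θ_def (d : ℕ) (l : List (Zd d)) : Θ d l = thetaShift d l.length l.sum := rfl

lemma measurable_Θ (d : ℕ) (l : List (Zd d)) : Measurable (Θ d l) :=
  measurable_thetaShift d l.length l.sum

lemma Θ_nil (d : ℕ) (ω : EnvSpace d) : Θ d [] ω = ω := by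
  funext m y e
  simp [Θ, thetaShift]

lemma Θ_cons (d : ℕ) (e : Zd d) (l : List (Zd d)) (ω : EnvSpace d) :
    Θ d (e :: l) ω = Θ d l (thetaShift d 1 e ω) := by
  show thetaShift d (e :: l).length (e :: l).sum ω
      = thetaShift d l.length l.sum (thetaShift d 1 e ω)
  rw [theta_add]
  simp only [List.length_cons, List.sum_cons]
  rw [show 1 + l.length = l.length + 1 by omega, add_comm e l.sum]

lemma theta_comm (d : ℕ) (e : Zd d) (l : List (Zd d)) (ω : EnvSpace d) :
    thetaShift d 1 e (Θ d l ω) = Θ d l (thetaShift d 1 e ω) := by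
  show thetaShift d 1 e (thetaShift d l.length l.sum ω)
      = thetaShift d l.length l.sum (thetaShift d 1 e ω)
  rw [theta_add, theta_add]
  rw [show l.length + 1 = 1 + l.length by omega, add_comm e l.sum]

lemma measurableSet_iff_mem {α : Type*} [MeasurableSpace α] {S T : Set α}
    (hS : MeasurableSet S) (hT : MeasurableSet T) :
    MeasurableSet {ω | ω ∈ S ↔ ω ∈ T} := by
  have h : {ω | ω ∈ S ↔ ω ∈ T} = (S ∩ T) ∪ (Sᶜ ∩ Tᶜ) := by
    ext ω; by_cases h1 : ω ∈ S <;> by_cases h2 : ω ∈ T <;> simp [h1, h2]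
  rw [h]
  exact (hS.inter hT).union (hS.compl.inter hT.compl)

/-- **Kozlov's theorem, part (i).** Suppose `ℙ` is stationary under all
space-time shifts and `{θ_{1,z} : z ∈ U}` is an ergodic family for `ℙ`.  If `ν` is an
invariant probability for the environmental process with `ν ≪ ℙ`, then `ν` is
equivalent to `ℙ`, i.e. also `ℙ ≪ ν`. -/
theorem invariant_measure_equivalent {d : ℕ} (hd : 1 ≤ d)
    (U : Finset (Zd d)) (hUne : U.Nonempty)
    (P : Measure (EnvSpace d)) [IsProbabilityMeasure P]
    (hsupp : ∀ᵐ ω ∂P, IsEnv d U ω)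
    (hstat : ∀ (n : ℕ) (x : Zd d), P.map (thetaShift d n x) = P)
    (herg : ∀ A : Set (EnvSpace d), MeasurableSet A →
      (∀ e ∈ U, thetaShift d 1 e ⁻¹' A = A) → P A = 0 ∨ P A = 1)
    (ν : Measure (EnvSpace d)) [IsProbabilityMeasure ν]
    (hinv : IsInvariantMeasure d U ν) (hac : ν ≪ P) :
    P ≪ ν := by
  classical
  haveI : SigmaFinite P := inferInstance
  haveI : SFinite ν := inferInstance
  set f := ν.rnDeriv P with hfdef
  have hfm : Measurable f := Measure.measurable_rnDeriv ν P
  have hνd : P.withDensity f = ν := Measure.withDensity_rnDeriv_eq ν P hac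
  set B : Set (EnvSpace d) := f ⁻¹' {0} with hBdef
  have hB : MeasurableSet B := hfm (measurableSet_singleton 0)
  have hmemB : ∀ ω, ω ∈ B ↔ f ω = 0 := fun ω => Iff.rfl
  -- ν B = 0
  have hνB : ν B = 0 := by
    rw [← hνd, withDensity_apply f hB]
    rw [setLIntegral_eq_zero_iff hB hfm]
    exact Filter.Eventually.of_forall fun ω hω => hω
  -- IsEnv holds ν-a.e.
  have henv : ∀ᵐ ω ∂ν, IsEnv d U ω := hsupp.filter_mono hac.ae_le
  -- Step: ν (θ_e⁻¹ B) = 0 for e ∈ U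
  have hνTB : ∀ e ∈ U, ν (thetaShift d 1 e ⁻¹' B) = 0 := by
    intro e he
    set g : EnvSpace d → ℝ := B.indicator (fun _ => (1 : ℝ)) with hgdef
    have hgm : Measurable g := measurable_const.indicator hB
    have hg01 : ∀ ω, 0 ≤ g ω ∧ g ω ≤ 1 := by
      intro ω
      by_cases h : ω ∈ B <;> simp [hgdef, Set.indicator_apply, h]
    have hIg : ∫ ω, g ω ∂ν = 0 := by
      rw [hgdef, integral_indicator_const (1 : ℝ) hB, measureReal_def, hνB]
      simp
    have hint := hinv g hgm ⟨1, fun ω => by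
      rw [abs_le]; constructor
      · linarith [(hg01 ω).1]
      · exact (hg01 ω).2⟩
    have hI0 : ∫ ω, Rop d U g ω ∂ν = 0 := hint.trans hIg
    have hRm : Measurable (Rop d U g) := by
      unfold Rop
      refine Finset.measurable_sum _ fun e' _ => Measurable.mul ?_ ?_
      · exact measurable_eval3 d 0 0 e'
      · exact hgm.comp (measurable_thetaShift d 1 e')
    have hnn : 0 ≤ᵐ[ν] Rop d U g := by
      filter_upwards [henv] with ω hω
      exact Finset.sum_nonneg fun e' he' =>
        mul_nonneg ((hω 0 0).1 e' he').le (hg01 _).1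
    have hbound : ∀ᵐ ω ∂ν, ‖Rop d U g ω‖ ≤ 1 := by
      filter_upwards [henv] with ω hω
      have h1 : Rop d U g ω ≤ 1 := by
        calc Rop d U g ω ≤ ∑ e' ∈ U, ω 0 0 e' := by
              refine Finset.sum_le_sum fun e' he' => ?_
              calc ω 0 0 e' * g (thetaShift d 1 e' ω) ≤ ω 0 0 e' * 1 :=
                    mul_le_mul_of_nonneg_left (hg01 _).2 ((hω 0 0).1 e' he').le
                _ = ω 0 0 e' := mul_one _
          _ = 1 := (hω 0 0).2.2
      have h0 : 0 ≤ Rop d U g ω :=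
        Finset.sum_nonneg fun e' he' => mul_nonneg ((hω 0 0).1 e' he').le (hg01 _).1
      rw [Real.norm_eq_abs, abs_of_nonneg h0]; exact h1
    have hIntble : Integrable (Rop d U g) ν :=
      Integrable.mono' (integrable_const 1) hRm.aestronglyMeasurable hbound
    have hae0 : Rop d U g =ᵐ[ν] 0 :=
      (integral_eq_zero_iff_of_nonneg_ae hnn hIntble).mp hI0
    have : ∀ᵐ ω ∂ν, thetaShift d 1 e ω ∉ B := by
      filter_upwards [henv, hae0] with ω hω h0
      have hterms := (Finset.sum_eq_zero_iff_of_nonneg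
        (fun e' he' => mul_nonneg ((hω 0 0).1 e' he').le (hg01 _).1)).mp h0 e he
      have hgz : g (thetaShift d 1 e ω) = 0 := by
        rcases mul_eq_zero.mp hterms with h | h
        · exact absurd h (ne_of_gt ((hω 0 0).1 e he))
        · exact h
      intro hmem
      rw [hgdef, Set.indicator_of_mem hmem] at hgz
      exact one_ne_zero hgz
    exact measure_eq_zero_iff_ae_notMem.mpr this
  -- one-step a.e. invariance of B under P
  have hstep : ∀ e ∈ U, ∀ᵐ ω ∂P, (thetaShift d 1 e ω ∈ B ↔ ω ∈ B) := by
    intro e he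
    have hA : MeasurableSet (thetaShift d 1 e ⁻¹' B) := measurable_thetaShift d 1 e hB
    have h1 : ∀ᵐ ω ∂P, thetaShift d 1 e ω ∈ B → ω ∈ B := by
      have hz : ∫⁻ ω in thetaShift d 1 e ⁻¹' B, f ω ∂P = 0 := by
        rw [← withDensity_apply f hA, hνd]; exact hνTB e he
      exact ((setLIntegral_eq_zero_iff hA hfm).mp hz).mono fun ω h hmem => h hmem
    have hPA : P (thetaShift d 1 e ⁻¹' B) = P B := by
      conv_rhs => rw [← hstat 1 e]
      rw [Measure.map_apply (measurable_thetaShift d 1 e) hB]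
    -- P (B \ A) = 0
    set A := thetaShift d 1 e ⁻¹' B with hAdef
    have hAB : P (A \ B) = 0 := by
      rw [measure_eq_zero_iff_ae_notMem]
      exact h1.mono fun ω h hx => hx.2 (h hx.1)
    have hUnion : P (A ∪ B) = P A := by
      have : P (A \ B ∪ B) = P (A \ B) + P B :=
        measure_union disjoint_sdiff_self_left hB
      rw [Set.diff_union_self] at this
      rw [this, hAB, zero_add, hPA]
    have hBA : P (B \ A) = 0 := by
      have hsub : B \ A ⊆ (A ∪ B) \ A := fun ω hω => ⟨Or.inr hω.1, hω.2⟩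
      refine measure_mono_null hsub ?_
      rw [measure_diff Set.subset_union_left hA.nullMeasurableSet (measure_ne_top P A),
        hUnion, tsub_self]
    have h2 : ∀ᵐ ω ∂P, ω ∈ B → thetaShift d 1 e ω ∈ B := by
      have := measure_eq_zero_iff_ae_notMem.mp hBA
      exact this.mono fun ω h hx => by
        by_contra hc; exact h ⟨hx, hc⟩
    filter_upwards [h1, h2] with ω ha hb
    exact ⟨ha, hb⟩
  -- word-level a.e. invariance
  have hword : ∀ l : List (Zd d), (∀ e ∈ l, e ∈ U) →
      ∀ᵐ ω ∂P, (Θ d l ω ∈ B ↔ ω ∈ B) := by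
    intro l
    induction l with
    | nil =>
      intro _
      exact Filter.Eventually.of_forall fun ω => by rw [Θ_nil]
    | cons e l ih =>
      intro hl
      have he : e ∈ U := hl e List.mem_cons_self
      have hlw : ∀ e' ∈ l, e' ∈ U := fun e' h => hl e' (List.mem_cons_of_mem e h)
      have hihm : MeasurableSet {ω | Θ d l ω ∈ B ↔ ω ∈ B} :=
        measurableSet_iff_mem (measurable_Θ d l hB) hB
      have hpull : ∀ᵐ ω ∂P, (Θ d l (thetaShift d 1 e ω) ∈ B ↔ thetaShift d 1 e ω ∈ B) := by
        have hmap : ∀ᵐ ω ∂(P.map (thetaShift d 1 e)), (Θ d l ω ∈ B ↔ ω ∈ B) := by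
          rw [hstat 1 e]; exact ih hlw
        exact (ae_map_iff (measurable_thetaShift d 1 e).aemeasurable hihm).mp hmap
      filter_upwards [hpull, hstep e he] with ω h1 h2
      rw [Θ_cons]
      exact h1.trans h2
  -- The exactly invariant set
  letI : Countable (Zd d) := inferInstance
  set Word := {l : List (Zd d) // ∀ e ∈ l, e ∈ U} with hWord
  set D : ℕ → Set (EnvSpace d) := fun n =>
    ⋂ (l : Word) (_ : l.1.length = n), Θ d l.1 ⁻¹' B with hD
  set B' : Set (EnvSpace d) := ⋂ N, ⋃ n, ⋃ (_ : N ≤ n), D n with hB'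
  set B'' : Set (EnvSpace d) := ⋃ (l : Word), Θ d l.1 ⁻¹' B' with hB''
  have hDm : ∀ n, MeasurableSet (D n) := fun n =>
    MeasurableSet.iInter fun l => MeasurableSet.iInter fun _ => measurable_Θ d l.1 hB
  have hB'm : MeasurableSet B' :=
    MeasurableSet.iInter fun N => MeasurableSet.iUnion fun n =>
      MeasurableSet.iUnion fun _ => hDm n
  have hB''m : MeasurableSet B'' :=
    MeasurableSet.iUnion fun l => measurable_Θ d l.1 hB'm
  -- membership in B'
  have hmemB' : ∀ ω, ω ∈ B' ↔ ∀ N, ∃ n, N ≤ n ∧ ω ∈ D n := by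
    intro ω
    simp only [hB', Set.mem_iInter, Set.mem_iUnion]
    constructor
    · intro h N; obtain ⟨n, hn, hd⟩ := h N; exact ⟨n, hn, hd⟩
    · intro h N; obtain ⟨n, hn, hd⟩ := h N; exact ⟨n, hn, hd⟩
  -- step property of B'
  have hstepB' : ∀ e ∈ U, ∀ ω, ω ∈ B' → thetaShift d 1 e ω ∈ B' := by
    intro e he ω hω
    rw [hmemB'] at hω ⊢
    intro N
    obtain ⟨n, hn, hDn⟩ := hω (N + 1)
    obtain ⟨m, rfl⟩ : ∃ m, n = m + 1 := ⟨n - 1, by omega⟩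
    refine ⟨m, by omega, ?_⟩
    simp only [hD, Set.mem_iInter] at hDn ⊢
    intro l hlen
    have hw : ∀ e' ∈ (e :: l.1), e' ∈ U := by
      intro e' h
      rcases List.mem_cons.mp h with h | h
      · exact h ▸ he
      · exact l.2 e' h
    have := hDn ⟨e :: l.1, hw⟩ (by simp [hlen])
    rw [Set.mem_preimage] at this ⊢
    rwa [Θ_cons] at this
  -- exact invariance of B''
  have hinvB'' : ∀ e ∈ U, thetaShift d 1 e ⁻¹' B'' = B'' := by
    intro e he
    ext ω
    simp only [Set.mem_preimage, hB'', Set.mem_iUnion]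
    constructor
    · rintro ⟨l, hl⟩
      have hw : ∀ e' ∈ (e :: l.1), e' ∈ U := by
        intro e' h
        rcases List.mem_cons.mp h with h | h
        · exact h ▸ he
        · exact l.2 e' h
      refine ⟨⟨e :: l.1, hw⟩, ?_⟩
      rwa [Θ_cons]
    · rintro ⟨l, hl⟩
      refine ⟨l, ?_⟩
      rw [← theta_comm]
      exact hstepB' e he _ hl
  -- a.e. equalities
  obtain ⟨e₀, he₀⟩ := hUne
  have hall : ∀ᵐ ω ∂P, ∀ l : Word, (Θ d l.1 ω ∈ B ↔ ω ∈ B) :=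
    ae_all_iff.mpr fun l => hword l.1 l.2
  have hDae : ∀ᵐ ω ∂P, ∀ n, (ω ∈ D n ↔ ω ∈ B) := by
    filter_upwards [hall] with ω hω
    intro n
    constructor
    · intro h
      have hw : ∀ e' ∈ List.replicate n e₀, e' ∈ U := by
        intro e' h'; rw [List.eq_of_mem_replicate h']; exact he₀
      simp only [hD, Set.mem_iInter] at h
      have := h ⟨List.replicate n e₀, hw⟩ (by simp)
      rw [Set.mem_preimage] at this
      exact (hω _).mp this
    · intro h
      simp only [hD, Set.mem_iInter]
      intro l _
      rw [Set.mem_preimage]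
      exact (hω l).mpr h
  have hB'ae : ∀ᵐ ω ∂P, (ω ∈ B' ↔ ω ∈ B) := by
    filter_upwards [hDae] with ω hω
    rw [hmemB']
    constructor
    · intro h
      obtain ⟨n, _, hn⟩ := h 0
      exact (hω n).mp hn
    · intro h N
      exact ⟨N, le_refl N, (hω N).mpr h⟩
  have hB''ae : ∀ᵐ ω ∂P, (ω ∈ B'' ↔ ω ∈ B) := by
    have hpull : ∀ᵐ ω ∂P, ∀ l : Word, (Θ d l.1 ω ∈ B' ↔ Θ d l.1 ω ∈ B) := by
      rw [ae_all_iff]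
      intro l
      have hm : MeasurableSet {ω | ω ∈ B' ↔ ω ∈ B} := measurableSet_iff_mem hB'm hB
      have hmap : ∀ᵐ ω ∂(P.map (thetaShift d l.1.length l.1.sum)), (ω ∈ B' ↔ ω ∈ B) := by
        rw [hstat l.1.length l.1.sum]; exact hB'ae
      exact (ae_map_iff (measurable_thetaShift d l.1.length l.1.sum).aemeasurable hm).mp hmap
    filter_upwards [hall, hpull] with ω h1 h2
    simp only [hB'', Set.mem_iUnion, Set.mem_preimage]
    constructor
    · rintro ⟨l, hl⟩
      exact (h1 l).mp ((h2 l).mp hl)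
    · intro h
      refine ⟨⟨[], by simp⟩, ?_⟩
      exact (h2 ⟨[], by simp⟩).mpr ((h1 ⟨[], by simp⟩).mpr h)
  have hPB'' : P B'' = P B :=
    measure_congr (Filter.eventuallyEq_set.mpr hB''ae)
  -- ergodicity: P B ∈ {0, 1}
  have hzero_or_one : P B = 0 ∨ P B = 1 := by
    rcases herg B'' hB''m hinvB'' with h | h
    · exact Or.inl (hPB'' ▸ h)
    · exact Or.inr (hPB'' ▸ h)
  rcases hzero_or_one with hPB0 | hPB1
  · -- P B = 0 : f > 0 a.e., conclude P ≪ ν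
    intro s hs
    obtain ⟨t, hst, htm, hνt⟩ := exists_measurable_superset_of_null hs
    have hz : ∫⁻ ω in t, f ω ∂P = 0 := by
      rw [← withDensity_apply f htm, hνd]; exact hνt
    have hft : ∀ᵐ ω ∂P, ω ∈ t → f ω = 0 := (setLIntegral_eq_zero_iff htm hfm).mp hz
    have hfpos : ∀ᵐ ω ∂P, f ω ≠ 0 := by
      have := measure_eq_zero_iff_ae_notMem.mp hPB0
      exact this.mono fun ω h h0 => h h0
    have hnt : ∀ᵐ ω ∂P, ω ∉ t := by
      filter_upwards [hft, hfpos] with ω h1 h2 ht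
      exact h2 (h1 ht)
    exact measure_mono_null hst (measure_eq_zero_iff_ae_notMem.mpr hnt)
  · -- P B = 1 : f = 0 a.e., contradiction with ν probability
    exfalso
    have hcompl : P Bᶜ = 0 := by
      rw [measure_compl hB (measure_ne_top _ _), hPB1, measure_univ, tsub_self]
    have hf0 : f =ᵐ[P] 0 := by
      have := measure_eq_zero_iff_ae_notMem.mp hcompl
      exact this.mono fun ω h => by
        have : ω ∈ B := not_not.mp fun hc => h hc
        exact this
    have hν0 : ν Set.univ = 0 := by
      rw [← hνd, withDensity_apply f MeasurableSet.univ, setLIntegral_univ,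
        lintegral_congr_ae hf0]
      simp
    rw [measure_univ] at hν0
    exact one_ne_zero hν0

end KozlovPartOne
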